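/- (U_𝔭 on the E-expansion, Corollary 5.12) Assume 𝔽_q(T) ⊆ F, let 𝔪 ⊆ A be a nonzero ideal with 𝔭 ∤ 𝔪, and assume E satisfies its functional equation for all γ ∈ GL₂(A). Let f = Σ_{i=0}^{ℓ} f_{i,E}·E^i where each f_{i,E} : Ω → L is modular of weight k−2i and type m−i for Γ₀(𝔪𝔭). Then U_𝔭(f) = Σ_{i=0}^{ℓ} c_i·E^i pointwise on Ω, where c_i := ℘^i · Σ_{h=0}^{ℓ−i} (h+i choose i)·U_𝔭(f_{h+i,E}·E_𝔭^h), and each c_i is modular of weight k−2i and type m−i for Γ₀(𝔪𝔭) (so this is the E-expansion of U_𝔭(f)). -/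

import Mathlib

noncomputable section

namespace DrinfeldQM

variable {L : Type*} [Field L]

/-- Entry `(i,j)` of `γ ∈ GL₂(F)`, viewed inside `L`. -/
def Mc (F : Subfield L) (γ : GL (Fin 2) F) (i j : Fin 2) : L :=
  ((γ : Matrix (Fin 2) (Fin 2) F) i j : L)

/-- Determinant of `γ ∈ GL₂(F)`, viewed inside `L`. -/
def detL (F : Subfield L) (γ : GL (Fin 2) F) : L :=
  ((γ : Matrix (Fin 2) (Fin 2) F).det : L)

/-- Automorphy factor `cz + d`. -/
def jf (F : Subfield L) (γ : GL (Fin 2) F) (z : L) : L :=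
  Mc F γ 1 0 * z + Mc F γ 1 1

/-- Fractional linear action of `GL₂(F)` on `L` (restricting to `Ω`). -/
def act (F : Subfield L) (γ : GL (Fin 2) F) (z : L) : L :=
  (Mc F γ 0 0 * z + Mc F γ 0 1) / jf F γ z

/-- The Drinfeld upper half plane `Ω = L ∖ F`. -/
def Omega (F : Subfield L) : Set L := {z | z ∉ F}

/-- The slash operator `f |_{k,m} γ` of weight `k` and type `m`. -/
def slash (F : Subfield L) (k m : ℤ) (f : L → L) (γ : GL (Fin 2) F) : L → L :=
  fun z => detL F γ ^ m * jf F γ z ^ (-k) * f (act F γ z)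

/-- `f` is quasi-modular of weight `k`, type `m` and depth `≤ ℓ` for the set `S ⊆ GL₂(F)`
with coefficient family `fam` (only the indices `0,…,ℓ` of `fam` are relevant). -/
def IsQM (F : Subfield L) (S : Set (GL (Fin 2) F)) (k m : ℤ) (ℓ : ℕ)
    (f : L → L) (fam : ℕ → L → L) : Prop :=
  Set.EqOn (fam 0) f (Omega F) ∧
    ∀ γ ∈ S, ∀ z ∈ Omega F,
      slash F k m f γ z =
        ∑ i ∈ Finset.range (ℓ + 1), fam i z * (Mc F γ 1 0 / jf F γ z) ^ i

/-- The coefficient family of the `i`-th coefficient `f_i` of a quasi-modular function with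
coefficient family `fam`:  `(f_i)_h = ((h+i) choose i) · f_{h+i}`. -/
def shiftFam (i : ℕ) (fam : ℕ → L → L) : ℕ → L → L :=
  fun h z => ((h + i).choose i : L) * fam (h + i) z

/-- The double-slash operator `f ∥_{k,m} γ` of a quasi-modular function of depth `≤ ℓ` with
coefficient family `fam`. -/
def dslash (F : Subfield L) (k m : ℤ) (ℓ : ℕ) (fam : ℕ → L → L)
    (γ : GL (Fin 2) F) : L → L :=
  fun z => ∑ i ∈ Finset.range (ℓ + 1),
    (-(Mc F γ 1 0) / jf F γ z) ^ i * detL F γ ^ (m - (i : ℤ)) *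
      jf F γ z ^ (2 * (i : ℤ) - k) * fam i (act F γ z)

/-- The double-slash operator on polynomial-valued functions `P : Ω → L[X]`:
`(P ∥_{k,m} γ)(z, X) = (det γ)^m (cz+d)^{-k} P(γ·z, ((cz+d)²/det γ)(X - c/(cz+d)))`. -/
def pdslash (F : Subfield L) (k m : ℤ) (P : L → Polynomial L)
    (γ : GL (Fin 2) F) : L → Polynomial L :=
  fun z =>
    Polynomial.C (detL F γ ^ m * jf F γ z ^ (-k)) *
      (P (act F γ z)).comp
        (Polynomial.C (jf F γ z ^ 2 / detL F γ) *
          (Polynomial.X - Polynomial.C (Mc F γ 1 0 / jf F γ z)))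

/-- The associated polynomial `P_f(z, X) = ∑_{i=0}^{ℓ} f_i(z) Xⁱ`. -/
def assocPoly (ℓ : ℕ) (fam : ℕ → L → L) : L → Polynomial L :=
  fun z => ∑ i ∈ Finset.range (ℓ + 1), Polynomial.C (fam i z) * Polynomial.X ^ i

/-- `E` satisfies the functional equation of the false Eisenstein series (weight 2, type 1,
depth 1, coefficient family `(E, -π⁻¹)`) for all `γ ∈ S`. -/
def EFunEq (F : Subfield L) (S : Set (GL (Fin 2) F)) (π : L) (E : L → L) : Prop :=
  ∀ γ ∈ S, ∀ z ∈ Omega F,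
    E (act F γ z) =
      (detL F γ)⁻¹ * jf F γ z ^ 2 * (E z - Mc F γ 1 0 / (π * jf F γ z))

variable {Fq : Type*} [Field Fq] [Fintype Fq]

/-- The image in `L` of a polynomial `r ∈ A = Fq[T]` under `A → F ⊆ L`. -/
def iL (F : Subfield L) (ι : Polynomial Fq →+* F) (r : Polynomial Fq) : L := (ι r : L)

/-- `γ ∈ GL₂(F)` lies in `Γ₀(𝔞) ⊆ GL₂(A)`: its entries come from a matrix `M` over
`A = Fq[T]` with unit determinant whose lower-left entry lies in `𝔞`.
Taking `𝔞 = ⊤` expresses membership in `GL₂(A)`. -/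
def InGamma0 (F : Subfield L) (ι : Polynomial Fq →+* F)
    (𝔞 : Ideal (Polynomial Fq)) (γ : GL (Fin 2) F) : Prop :=
  ∃ M : Matrix (Fin 2) (Fin 2) (Polynomial Fq),
    (∀ i j, iL F ι (M i j) = Mc F γ i j) ∧ IsUnit M.det ∧ M 1 0 ∈ 𝔞

/-- `γ ∈ GL₂(F)` lies in the principal congruence subgroup `Γ(𝔫) ⊆ GL₂(A)`. -/
def InGammaN (F : Subfield L) (ι : Polynomial Fq →+* F)
    (𝔫 : Ideal (Polynomial Fq)) (γ : GL (Fin 2) F) : Prop :=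
  ∃ M : Matrix (Fin 2) (Fin 2) (Polynomial Fq),
    (∀ i j, iL F ι (M i j) = Mc F γ i j) ∧ IsUnit M.det ∧
      ∀ i j, M i j - (1 : Matrix (Fin 2) (Fin 2) (Polynomial Fq)) i j ∈ 𝔫

/-- `g` is modular of weight `w` and type `t` for `Γ₀(𝔞)`. -/
def IsModularOn (F : Subfield L) (ι : Polynomial Fq →+* F)
    (𝔞 : Ideal (Polynomial Fq)) (w t : ℤ) (g : L → L) : Prop :=
  ∀ γ : GL (Fin 2) F, InGamma0 F ι 𝔞 γ → ∀ z ∈ Omega F, slash F w t g γ z = g z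

/-- The degeneracy map `(δ_𝔭 g)(z) = g(℘ z)`. -/
def deltaP (F : Subfield L) (ι : Polynomial Fq →+* F) (℘ : Polynomial Fq)
    (g : L → L) : L → L := fun z => g (iL F ι ℘ * z)

/-- The Atkin–Lehner operator `(U_𝔭 g)(z) = ∑_{Q ∈ A, deg Q < deg ℘} g((z+Q)/℘)`,
where `Q = ∑ᵢ cᵢ Tⁱ` ranges over polynomials of degree `< deg ℘`. -/
def UP (F : Subfield L) (ι : Polynomial Fq →+* F) (℘ : Polynomial Fq)
    (g : L → L) : L → L :=
  fun z => ∑ c : Fin ℘.natDegree → Fq,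
    g ((z + iL F ι (∑ i : Fin ℘.natDegree, Polynomial.C (c i) * Polynomial.X ^ (i : ℕ))) /
      iL F ι ℘)

/-- The `𝔭`-stabilization `E_𝔭 = E - ℘·δ_𝔭E`. -/
def Ep (F : Subfield L) (ι : Polynomial Fq →+* F) (℘ : Polynomial Fq)
    (E : L → L) : L → L := fun z => E z - iL F ι ℘ * deltaP F ι ℘ E z

section AuxiliaryLemmas

open Polynomial Finset

set_option linter.unusedSectionVars false

variable {L : Type*} [Field L] {Fq : Type*} [Field Fq] [Fintype Fq]

lemma Mc_mem (F : Subfield L) (γ : GL (Fin 2) F) (i j : Fin 2) : Mc F γ i j ∈ F :=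
  SetLike.coe_mem _

lemma detL_ne_zero (F : Subfield L) (γ : GL (Fin 2) F) : detL F γ ≠ 0 := by
  have h : IsUnit (γ : Matrix (Fin 2) (Fin 2) F).det :=
    (Matrix.isUnit_iff_isUnit_det _).mp γ.isUnit
  simpa [detL] using h.ne_zero

lemma detL_fin_two (F : Subfield L) (γ : GL (Fin 2) F) :
    detL F γ = Mc F γ 0 0 * Mc F γ 1 1 - Mc F γ 0 1 * Mc F γ 1 0 := by
  simp [detL, Mc, Matrix.det_fin_two]

lemma jf_ne_zero (F : Subfield L) (γ : GL (Fin 2) F) {z : L} (hz : z ∈ Omega F) :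
    jf F γ z ≠ 0 := by
  intro h0
  by_cases hC : Mc F γ 1 0 = 0
  · have hD : Mc F γ 1 1 = 0 := by rw [jf, hC] at h0; simpa using h0
    exact detL_ne_zero F γ (by rw [detL_fin_two, hC, hD]; ring)
  · apply hz
    have hzF : z = -(Mc F γ 1 1) / Mc F γ 1 0 := by
      rw [jf] at h0; field_simp; linear_combination h0
    rw [hzF]
    exact F.div_mem (F.neg_mem (Mc_mem F γ 1 1)) (Mc_mem F γ 1 0)

lemma act_mem_Omega (F : Subfield L) (γ : GL (Fin 2) F) {z : L} (hz : z ∈ Omega F) :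
    act F γ z ∈ Omega F := by
  intro hu
  set u : L := act F γ z with hu'
  have hj := jf_ne_zero F γ hz
  have key : Mc F γ 0 0 * z + Mc F γ 0 1 = u * (Mc F γ 1 0 * z + Mc F γ 1 1) := by
    rw [hu', act, jf] at *; rw [div_mul_cancel₀ _ hj]
  by_cases h1 : Mc F γ 0 0 - u * Mc F γ 1 0 = 0
  · have h2 : Mc F γ 0 1 = u * Mc F γ 1 1 := by linear_combination key - z * h1
    apply detL_ne_zero F γ
    rw [detL_fin_two]
    have h3 : Mc F γ 0 0 = u * Mc F γ 1 0 := by linear_combination h1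
    rw [h2, h3]; ring
  · apply hz
    have hzeq : z = (u * Mc F γ 1 1 - Mc F γ 0 1) / (Mc F γ 0 0 - u * Mc F γ 1 0) := by
      field_simp; linear_combination key
    rw [hzeq]
    exact F.div_mem (F.sub_mem (F.mul_mem hu (Mc_mem F γ 1 1)) (Mc_mem F γ 0 1))
      (F.sub_mem (Mc_mem F γ 0 0) (F.mul_mem hu (Mc_mem F γ 1 0)))

lemma mul_add_mem_Omega (F : Subfield L) {x y z : L} (hx : x ∈ F) (hx0 : x ≠ 0)
    (hy : y ∈ F) (hz : z ∈ Omega F) : x * z + y ∈ Omega F := by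
  intro h
  exact hz (by
    have : z = ((x * z + y) - y) / x := by field_simp; ring
    rw [this]
    exact F.div_mem (F.sub_mem h hy) hx)

lemma div_add_mem_Omega (F : Subfield L) {x y z : L} (hx : x ∈ F) (hx0 : x ≠ 0)
    (hy : y ∈ F) (hz : z ∈ Omega F) : (z + y) / x ∈ Omega F := by
  intro h
  exact hz (by
    have : z = x * ((z + y) / x) - y := by field_simp; ring
    rw [this]
    exact F.sub_mem (F.mul_mem hx h) hy)

/-! ### `iL` and `glA` -/

lemma iL_mem (F : Subfield L) (ι : Polynomial Fq →+* F) (r : Polynomial Fq) :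
    iL F ι r ∈ F := SetLike.coe_mem _

lemma iL_hom (F : Subfield L) (ι : Polynomial Fq →+* F) :
    iL F ι = (F.subtype.comp ι : Polynomial Fq →+* L) := rfl

lemma iL_zero (F : Subfield L) (ι : Polynomial Fq →+* F) : iL F ι 0 = 0 := by
  rw [iL_hom]; exact map_zero _

lemma iL_one (F : Subfield L) (ι : Polynomial Fq →+* F) : iL F ι 1 = 1 := by
  rw [iL_hom]; exact map_one _

lemma iL_add (F : Subfield L) (ι : Polynomial Fq →+* F) (r s : Polynomial Fq) :
    iL F ι (r + s) = iL F ι r + iL F ι s := by rw [iL_hom]; exact map_add _ _ _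

lemma iL_sub (F : Subfield L) (ι : Polynomial Fq →+* F) (r s : Polynomial Fq) :
    iL F ι (r - s) = iL F ι r - iL F ι s := by rw [iL_hom]; exact map_sub _ _ _

lemma iL_mul (F : Subfield L) (ι : Polynomial Fq →+* F) (r s : Polynomial Fq) :
    iL F ι (r * s) = iL F ι r * iL F ι s := by rw [iL_hom]; exact map_mul _ _ _

lemma iL_ne_zero (F : Subfield L) (ι : Polynomial Fq →+* F) (hι : Function.Injective ι)
    {r : Polynomial Fq} (hr : r ≠ 0) : iL F ι r ≠ 0 := by
  intro h
  apply hr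
  apply hι
  have : (ι r : L) = ((0 : F) : L) := by simpa [iL] using h
  rw [map_zero]
  exact_mod_cast Subtype.coe_injective this

def glA (F : Subfield L) (ι : Polynomial Fq →+* F)
    (M : Matrix (Fin 2) (Fin 2) (Polynomial Fq)) (h : IsUnit M.det) : GL (Fin 2) F :=
  Matrix.GeneralLinearGroup.mkOfDetNeZero (M.map ι) (by
    rw [← RingHom.mapMatrix_apply, ← RingHom.map_det]
    exact (h.map ι).ne_zero)

lemma glA_coe (F : Subfield L) (ι : Polynomial Fq →+* F)
    (M : Matrix (Fin 2) (Fin 2) (Polynomial Fq)) (h : IsUnit M.det) :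
    (glA F ι M h : Matrix (Fin 2) (Fin 2) F) = M.map ι := rfl

lemma Mc_glA (F : Subfield L) (ι : Polynomial Fq →+* F)
    (M : Matrix (Fin 2) (Fin 2) (Polynomial Fq)) (h : IsUnit M.det) (i j : Fin 2) :
    Mc F (glA F ι M h) i j = iL F ι (M i j) := by
  simp [Mc, glA_coe, Matrix.map_apply, iL]

lemma glA_mem (F : Subfield L) (ι : Polynomial Fq →+* F)
    (M : Matrix (Fin 2) (Fin 2) (Polynomial Fq)) (h : IsUnit M.det)
    (𝔞 : Ideal (Polynomial Fq)) (hm : M 1 0 ∈ 𝔞) : InGamma0 F ι 𝔞 (glA F ι M h) :=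
  ⟨M, fun i j => (Mc_glA F ι M h i j).symm, h, hm⟩

lemma entries_eq (F : Subfield L) (ι : Polynomial Fq →+* F) {γ : GL (Fin 2) F}
    {M : Matrix (Fin 2) (Fin 2) (Polynomial Fq)}
    (hM : ∀ i j, iL F ι (M i j) = Mc F γ i j) :
    (γ : Matrix (Fin 2) (Fin 2) F) = M.map ι := by
  ext i j
  rw [Matrix.map_apply]
  exact (hM i j).symm

lemma detL_eq_iL (F : Subfield L) (ι : Polynomial Fq →+* F) {γ : GL (Fin 2) F}
    {M : Matrix (Fin 2) (Fin 2) (Polynomial Fq)}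
    (hM : ∀ i j, iL F ι (M i j) = Mc F γ i j) :
    detL F γ = iL F ι M.det := by
  rw [detL, entries_eq F ι hM, ← RingHom.mapMatrix_apply, ← RingHom.map_det]
  rfl

lemma detL_glA (F : Subfield L) (ι : Polynomial Fq →+* F)
    (M : Matrix (Fin 2) (Fin 2) (Polynomial Fq)) (h : IsUnit M.det) :
    detL F (glA F ι M h) = iL F ι M.det :=
  detL_eq_iL F ι (fun i j => (Mc_glA F ι M h i j).symm)

end AuxiliaryLemmas
section Aux2

open Polynomial Finset

set_option linter.unusedSectionVars false

variable {L : Type*} [Field L] {Fq : Type*} [Field Fq] [Fintype Fq]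

/-- The polynomial with coefficient vector `v`. -/
def polv (℘ : Polynomial Fq) (v : Fin ℘.natDegree → Fq) : Polynomial Fq :=
  ∑ i : Fin ℘.natDegree, Polynomial.C (v i) * Polynomial.X ^ (i : ℕ)

lemma polv_coeff (℘ : Polynomial Fq) (v : Fin ℘.natDegree → Fq) (j : ℕ) :
    (polv ℘ v).coeff j = if h : j < ℘.natDegree then v ⟨j, h⟩ else 0 := by
  rw [polv, Polynomial.finset_sum_coeff]
  simp only [Polynomial.coeff_C_mul, Polynomial.coeff_X_pow, mul_ite, mul_one, mul_zero]
  by_cases h : j < ℘.natDegree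
  · rw [dif_pos h, Finset.sum_eq_single (⟨j, h⟩ : Fin ℘.natDegree)]
    · simp
    · intro b _ hb
      rw [if_neg]
      intro he
      exact hb (Fin.ext he.symm)
    · simp
  · rw [dif_neg h]
    apply Finset.sum_eq_zero
    intro b _
    rw [if_neg]
    intro he
    have := b.isLt
    omega

lemma polv_natDegree_lt (℘ : Polynomial Fq) (hn : 0 < ℘.natDegree)
    (v : Fin ℘.natDegree → Fq) : (polv ℘ v).natDegree < ℘.natDegree := by
  by_cases h : polv ℘ v = 0
  · simpa [h] using hn
  · rw [Polynomial.natDegree_lt_iff_degree_lt h,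
      Polynomial.degree_lt_iff_coeff_zero]
    intro m hm
    rw [polv_coeff, dif_neg (by omega)]

lemma polv_injective (℘ : Polynomial Fq) : Function.Injective (polv ℘) := by
  intro v₁ v₂ h
  funext i
  have h1 := congrArg (fun p => Polynomial.coeff p (i : ℕ)) h
  simpa [polv_coeff, i.isLt] using h1

lemma polv_sub (℘ : Polynomial Fq) (v₁ v₂ : Fin ℘.natDegree → Fq) :
    polv ℘ v₁ - polv ℘ v₂ = polv ℘ (v₁ - v₂) := by
  rw [polv, polv, polv, ← Finset.sum_sub_distrib]
  congr 1; funext i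
  rw [Pi.sub_apply, map_sub]; ring

lemma polv_modByMonic (℘ : Polynomial Fq) (hmon : ℘.Monic) (hne1 : ℘ ≠ 1)
    (p : Polynomial Fq) :
    polv ℘ (fun i => (p %ₘ ℘).coeff (i : ℕ)) = p %ₘ ℘ := by
  have hlt : (p %ₘ ℘).natDegree < ℘.natDegree :=
    Polynomial.natDegree_modByMonic_lt p hmon hne1
  conv_rhs => rw [(p %ₘ ℘).as_sum_range' ℘.natDegree hlt]
  rw [polv, ← Fin.sum_univ_eq_sum_range]
  congr 1; funext i
  rw [Polynomial.C_mul_X_pow_eq_monomial]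

end Aux2
section Aux3

open Polynomial Finset

set_option linter.unusedSectionVars false

variable {L : Type*} [Field L] {Fq : Type*} [Field Fq] [Fintype Fq]

lemma InGamma0.mono {F : Subfield L} {ι : Polynomial Fq →+* F}
    {𝔞 𝔟 : Ideal (Polynomial Fq)} (h : 𝔞 ≤ 𝔟) {γ : GL (Fin 2) F}
    (hγ : InGamma0 F ι 𝔞 γ) : InGamma0 F ι 𝔟 γ := by
  obtain ⟨M, hM, hdet, hc⟩ := hγ
  exact ⟨M, hM, hdet, h hc⟩

lemma IsModularOn.mono {F : Subfield L} {ι : Polynomial Fq →+* F}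
    {𝔞 𝔟 : Ideal (Polynomial Fq)} (h : 𝔞 ≤ 𝔟) {w t : ℤ} {g : L → L}
    (hg : IsModularOn F ι 𝔟 w t g) : IsModularOn F ι 𝔞 w t g :=
  fun γ hγ z hz => hg γ (hγ.mono h) z hz

lemma IsModularOn.mul {F : Subfield L} {ι : Polynomial Fq →+* F}
    {𝔞 : Ideal (Polynomial Fq)} {w₁ t₁ w₂ t₂ w t : ℤ} {g₁ g₂ : L → L}
    (h₁ : IsModularOn F ι 𝔞 w₁ t₁ g₁) (h₂ : IsModularOn F ι 𝔞 w₂ t₂ g₂)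
    (hw : w = w₁ + w₂) (ht : t = t₁ + t₂) :
    IsModularOn F ι 𝔞 w t (fun z => g₁ z * g₂ z) := by
  intro γ hγ z hz
  have e1 := h₁ γ hγ z hz
  have e2 := h₂ γ hγ z hz
  rw [slash] at e1 e2 ⊢
  dsimp only
  rw [← e1, ← e2, hw, ht]
  rw [zpow_add₀ (detL_ne_zero F γ), neg_add, zpow_add₀ (jf_ne_zero F γ hz)]
  ring

lemma IsModularOn.one {F : Subfield L} {ι : Polynomial Fq →+* F}
    {𝔞 : Ideal (Polynomial Fq)} :
    IsModularOn F ι 𝔞 0 0 (fun _ => (1 : L)) := by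
  intro γ hγ z hz
  simp [slash]

lemma IsModularOn.pow {F : Subfield L} {ι : Polynomial Fq →+* F}
    {𝔞 : Ideal (Polynomial Fq)} {w t : ℤ} {g : L → L}
    (hg : IsModularOn F ι 𝔞 w t g) (n : ℕ) :
    IsModularOn F ι 𝔞 (n * w) (n * t) (fun z => g z ^ n) := by
  induction n with
  | zero => simpa using IsModularOn.one
  | succ n ih =>
      have := ih.mul hg (w := ((n+1 : ℕ) : ℤ) * w) (t := ((n+1 : ℕ) : ℤ) * t)
        (by push_cast; ring) (by push_cast; ring)
      intro γ hγ z hz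
      have h2 := this γ hγ z hz
      simp only [← pow_succ] at h2
      exact h2

lemma IsModularOn.const_mul {F : Subfield L} {ι : Polynomial Fq →+* F}
    {𝔞 : Ideal (Polynomial Fq)} {w t : ℤ} {g : L → L} (a : L)
    (hg : IsModularOn F ι 𝔞 w t g) :
    IsModularOn F ι 𝔞 w t (fun z => a * g z) := by
  intro γ hγ z hz
  have e := hg γ hγ z hz
  rw [slash] at e ⊢
  dsimp only
  rw [← e]; ring

lemma IsModularOn.sum {F : Subfield L} {ι : Polynomial Fq →+* F}
    {𝔞 : Ideal (Polynomial Fq)} {w t : ℤ} {β : Type*} {s : Finset β} {g : β → L → L}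
    (hg : ∀ j ∈ s, IsModularOn F ι 𝔞 w t (g j)) :
    IsModularOn F ι 𝔞 w t (fun z => ∑ j ∈ s, g j z) := by
  intro γ hγ z hz
  rw [slash, Finset.mul_sum]
  apply Finset.sum_congr rfl
  intro j hj
  exact hg j hj γ hγ z hz

lemma IsModularOn.congr {F : Subfield L} {ι : Polynomial Fq →+* F}
    {𝔞 : Ideal (Polynomial Fq)} {w t : ℤ} {g g' : L → L}
    (hg : IsModularOn F ι 𝔞 w t g) (h : ∀ z, g' z = g z) :
    IsModularOn F ι 𝔞 w t g' := by
  have : g' = g := funext h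
  rwa [this]

lemma E_translate {F : Subfield L} {ι : Polynomial Fq →+* F} {π : L} {E : L → L}
    (hE : EFunEq F {γ : GL (Fin 2) F | InGamma0 F ι ⊤ γ} π E)
    (r : Polynomial Fq) {z : L} (hz : z ∈ Omega F) :
    E (z + iL F ι r) = E z := by
  have hdet : IsUnit (Matrix.det !![(1 : Polynomial Fq), r; 0, 1]) := by
    simp [Matrix.det_fin_two_of]
  have h := hE (glA F ι _ hdet) (glA_mem F ι _ hdet ⊤ trivial) z hz
  simp only [act, jf, detL_glA, Mc_glA] at h
  rw [show !![(1 : Polynomial Fq), r; 0, 1] 0 0 = 1 from rfl,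
    show !![(1 : Polynomial Fq), r; 0, 1] 0 1 = r from rfl,
    show !![(1 : Polynomial Fq), r; 0, 1] 1 0 = 0 from rfl,
    show !![(1 : Polynomial Fq), r; 0, 1] 1 1 = 1 from rfl,
    show (!![(1 : Polynomial Fq), r; 0, 1]).det = 1 by simp [Matrix.det_fin_two_of]] at h
  rw [iL_zero, iL_one] at h
  simpa using h

end Aux3
section Aux4

open Polynomial Finset

set_option linter.unusedSectionVars false
set_option maxHeartbeats 800000

variable {L : Type*} [Field L] {Fq : Type*} [Field Fq] [Fintype Fq]

lemma Ep_modular {F : Subfield L} {ι : Polynomial Fq →+* F} (hι : Function.Injective ι)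
    {℘ : Polynomial Fq} (hmon : ℘.Monic) {π : L} (hπ : π ≠ 0) {E : L → L}
    (hE : EFunEq F {γ : GL (Fin 2) F | InGamma0 F ι ⊤ γ} π E) :
    IsModularOn F ι (Ideal.span {℘}) 2 1 (Ep F ι ℘ E) := by
  intro γ hγ z hz
  obtain ⟨M, hM, hdet, hcmem⟩ := hγ
  obtain ⟨c', hc'⟩ := Ideal.mem_span_singleton.mp hcmem
  set Pl := iL F ι ℘ with hPl
  have hP : Pl ≠ 0 := iL_ne_zero F ι hι hmon.ne_zero
  have hj : jf F γ z ≠ 0 := jf_ne_zero F γ hz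
  have hd : detL F γ ≠ 0 := detL_ne_zero F γ
  have hz' : Pl * z ∈ Omega F := by
    have := mul_add_mem_Omega F (iL_mem F ι ℘) hP F.zero_mem hz
    simpa using this
  set M'' : Matrix (Fin 2) (Fin 2) (Polynomial Fq) := !![M 0 0, ℘ * M 0 1; c', M 1 1]
    with hM''
  have hdet2 : M''.det = M.det := by
    rw [hM'', Matrix.det_fin_two_of, Matrix.det_fin_two]
    linear_combination (M 0 1) * hc'
  have hdetu : IsUnit M''.det := hdet2 ▸ hdet
  have h2 := hE (glA F ι M'' hdetu) (glA_mem F ι M'' hdetu ⊤ trivial) (Pl * z) hz'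
  have h1 := hE γ ⟨M, hM, hdet, trivial⟩ z hz
  simp only [act, jf, detL_glA, Mc_glA] at h2
  rw [show M'' 0 0 = M 0 0 from rfl, show M'' 0 1 = ℘ * M 0 1 from rfl,
    show M'' 1 0 = c' from rfl, show M'' 1 1 = M 1 1 from rfl] at h2
  have hCc : Mc F γ 1 0 = Pl * iL F ι c' := by
    rw [← hM 1 0, hc', iL_mul]
  have hjj : iL F ι c' * (Pl * z) + iL F ι (M 1 1) = jf F γ z := by
    rw [jf, hCc, hM 1 1]; ring
  have hact : (iL F ι (M 0 0) * (Pl * z) + iL F ι (℘ * M 0 1)) / jf F γ z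
      = Pl * act F γ z := by
    rw [act, iL_mul, hM 0 0, hM 0 1, ← hPl]
    field_simp
  rw [hjj, hact] at h2
  have hdetL2 : iL F ι M''.det = detL F γ := by
    rw [hdet2, detL_eq_iL F ι hM]
  rw [hdetL2] at h2
  rw [slash]
  show detL F γ ^ (1 : ℤ) * jf F γ z ^ (-(2 : ℤ)) * Ep F ι ℘ E (act F γ z) = Ep F ι ℘ E z
  rw [Ep, Ep, deltaP, deltaP, ← hPl, h1, h2, hCc]
  rw [zpow_one, show (-(2:ℤ)) = (-2 : ℤ) from rfl]
  rw [show jf F γ z ^ (-2 : ℤ) = (jf F γ z ^ (2:ℕ))⁻¹ by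
    rw [zpow_neg, show ((2:ℤ)) = ((2:ℕ):ℤ) from rfl, zpow_natCast]]
  field_simp
  ring

end Aux4
section Aux5

open Polynomial Finset

set_option linter.unusedSectionVars false
set_option maxHeartbeats 1600000

variable {L : Type*} [Field L] {Fq : Type*} [Field Fq] [Fintype Fq]

lemma UP_eq (F : Subfield L) (ι : Polynomial Fq →+* F) (℘ : Polynomial Fq)
    (g : L → L) (z : L) :
    UP F ι ℘ g z = ∑ v : Fin ℘.natDegree → Fq,
      g ((z + iL F ι (polv ℘ v)) / iL F ι ℘) := rfl

lemma UP_modular {F : Subfield L} {ι : Polynomial Fq →+* F} (hι : Function.Injective ι)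
    {℘ : Polynomial Fq} (hmon : ℘.Monic) (hirr : Irreducible ℘)
    {𝔞 : Ideal (Polynomial Fq)} (h𝔞 : 𝔞 ≤ Ideal.span {℘}) {w t : ℤ} {g : L → L}
    (hg : IsModularOn F ι 𝔞 w t g) : IsModularOn F ι 𝔞 w t (UP F ι ℘ g) := by
  have hne1 : ℘ ≠ 1 := fun h => hirr.not_isUnit (h ▸ isUnit_one)
  have hn : 0 < ℘.natDegree := by
    rcases Nat.eq_zero_or_pos ℘.natDegree with h0 | h
    · exact absurd (hmon.natDegree_eq_zero.mp h0) hne1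
    · exact h
  haveI : (Ideal.span {℘}).IsMaximal := PrincipalIdealRing.isMaximal_of_irreducible hirr
  letI : Field (Polynomial Fq ⧸ Ideal.span {℘}) := Ideal.Quotient.field _
  set φ := Ideal.Quotient.mk (Ideal.span {℘}) with hφdef
  have hφ℘ : φ ℘ = 0 := Ideal.Quotient.eq_zero_iff_mem.mpr (Ideal.subset_span rfl)
  intro γ hγ z hz
  obtain ⟨M, hM, hdet, hcm⟩ := hγ
  set a := M 0 0 with ha; set b := M 0 1 with hb
  set cc := M 1 0 with hcc; set d := M 1 1 with hd
  have hdet_eq : M.det = a * d - b * cc := Matrix.det_fin_two M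
  have hφcc : φ cc = 0 := Ideal.Quotient.eq_zero_iff_mem.mpr (h𝔞 hcm)
  have hφdet : φ M.det ≠ 0 := (hdet.map φ).ne_zero
  have hφad : φ a * φ d ≠ 0 := by
    intro h0
    apply hφdet
    rw [hdet_eq, map_sub, map_mul, map_mul, hφcc, mul_zero, sub_zero, h0]
  have hφa : φ a ≠ 0 := left_ne_zero_of_mul hφad
  have hφd : φ d ≠ 0 := right_ne_zero_of_mul hφad
  obtain ⟨aInv, haInv⟩ := Ideal.Quotient.mk_surjective ((φ a)⁻¹)
  have hφmod : ∀ p : Polynomial Fq, φ (p %ₘ ℘) = φ p := by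
    intro p
    rw [Polynomial.modByMonic_eq_sub_mul_div p ℘, map_sub, map_mul, hφ℘, zero_mul, sub_zero]
  set Qp : (Fin ℘.natDegree → Fq) → Polynomial Fq :=
    fun v => (aInv * (b + polv ℘ v * d)) %ₘ ℘ with hQpdef
  set τ : (Fin ℘.natDegree → Fq) → (Fin ℘.natDegree → Fq) :=
    fun v i => (Qp v).coeff (i : ℕ) with hτdef
  have hpolτ : ∀ v, polv ℘ (τ v) = Qp v := fun v => polv_modByMonic ℘ hmon hne1 _
  have hφQp : ∀ v, φ (Qp v) = (φ a)⁻¹ * (φ b + φ (polv ℘ v) * φ d) := by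
    intro v
    rw [hQpdef]
    dsimp only
    rw [hφmod, map_mul, map_add, map_mul, haInv]
  have hτbij : Function.Bijective τ := by
    apply Finite.injective_iff_bijective.mp
    intro v₁ v₂ h12
    have hQeq : Qp v₁ = Qp v₂ := by rw [← hpolτ v₁, ← hpolτ v₂, h12]
    have hres : φ (polv ℘ v₁) = φ (polv ℘ v₂) := by
      have h2 := congrArg φ hQeq
      rw [hφQp, hφQp] at h2
      exact mul_right_cancel₀ hφd (add_left_cancel (mul_left_cancel₀ (inv_ne_zero hφa) h2))
    have hdvd : ℘ ∣ polv ℘ (v₁ - v₂) := by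
      rw [← polv_sub, ← Ideal.mem_span_singleton, ← Ideal.Quotient.eq_zero_iff_mem,
        map_sub, hres, sub_self]
    have hz0 : polv ℘ (v₁ - v₂) = 0 :=
      Polynomial.eq_zero_of_dvd_of_natDegree_lt hdvd (polv_natDegree_lt ℘ hn _)
    have h00 : polv ℘ (v₁ - v₂) = polv ℘ 0 := by
      rw [hz0]; simp [polv]
    have := polv_injective ℘ h00
    rwa [sub_eq_zero] at this
  -- set up L-side constants
  set P := iL F ι ℘ with hP
  have hPne : P ≠ 0 := iL_ne_zero F ι hι hmon.ne_zero
  have hjne : jf F γ z ≠ 0 := jf_ne_zero F γ hz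
  have hjγ : jf F γ z = iL F ι cc * z + iL F ι d := by
    rw [jf, hM 1 0, hM 1 1]
  have hactγ : act F γ z = (iL F ι a * z + iL F ι b) / (iL F ι cc * z + iL F ι d) := by
    rw [act, jf, hM 0 0, hM 0 1, hM 1 0, hM 1 1]
  have key : ∀ v : Fin ℘.natDegree → Fq,
      detL F γ ^ t * jf F γ z ^ (-w) *
        g ((act F γ z + iL F ι (polv ℘ v)) / P) =
      g ((z + iL F ι (polv ℘ (τ v))) / P) := by
    intro v
    have hdvd' : ℘ ∣ (b + polv ℘ v * d - (a + polv ℘ v * cc) * Qp v) := by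
      rw [← Ideal.mem_span_singleton, ← Ideal.Quotient.eq_zero_iff_mem]
      rw [map_sub, map_add, map_mul, map_mul, map_add, map_mul, hφcc, hφQp v]
      field_simp
      rw [← hφdef]; ring
    obtain ⟨b', hb'⟩ := hdvd'
    set M' : Matrix (Fin 2) (Fin 2) (Polynomial Fq) :=
      !![a + polv ℘ v * cc, b'; ℘ * cc, d - cc * Qp v] with hM'def
    have hdetM' : M'.det = M.det := by
      rw [hM'def, Matrix.det_fin_two_of, hdet_eq]
      linear_combination cc * hb'
    have hdetu' : IsUnit M'.det := hdetM' ▸ hdet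
    have hmem' : InGamma0 F ι 𝔞 (glA F ι M' hdetu') := by
      apply glA_mem
      rw [hM'def]
      show ℘ * cc ∈ 𝔞
      exact Ideal.mul_mem_left 𝔞 ℘ hcm
    set w' : L := (z + iL F ι (Qp v)) / P with hw'def
    have hw'Ω : w' ∈ Omega F :=
      div_add_mem_Omega F (iL_mem F ι ℘) hPne (iL_mem F ι (Qp v)) hz
    have hmod' := hg (glA F ι M' hdetu') hmem' w' hw'Ω
    rw [slash] at hmod'
    -- entries of M'
    have e00 : M' 0 0 = a + polv ℘ v * cc := rfl
    have e01 : M' 0 1 = b' := rfl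
    have e10 : M' 1 0 = ℘ * cc := rfl
    have e11 : M' 1 1 = d - cc * Qp v := rfl
    have hjf' : jf F (glA F ι M' hdetu') w' = jf F γ z := by
      rw [jf, Mc_glA, Mc_glA, e10, e11, hjγ, hw'def, iL_mul, iL_sub, iL_mul, ← hP]
      field_simp
      ring
    have hbL : iL F ι b + iL F ι (polv ℘ v) * iL F ι d -
        (iL F ι a + iL F ι (polv ℘ v) * iL F ι cc) * iL F ι (Qp v) = P * iL F ι b' := by
      have h3 := congrArg (iL F ι) hb'
      rw [iL_sub, iL_add, iL_mul, iL_mul, iL_add, iL_mul, iL_mul] at h3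
      rw [← hP] at h3
      exact h3
    have hact' : act F (glA F ι M' hdetu') w' = (act F γ z + iL F ι (polv ℘ v)) / P := by
      rw [act, hjf', Mc_glA, Mc_glA, e00, e01, iL_add, iL_mul, hactγ, hjγ, hw'def]
      have hcz : iL F ι cc * z + iL F ι d ≠ 0 := hjγ ▸ hjne
      rw [div_eq_div_iff hcz hPne]
      have h1 : (iL F ι a + iL F ι (polv ℘ v) * iL F ι cc) * ((z + iL F ι (Qp v)) / P) * P
          = (iL F ι a + iL F ι (polv ℘ v) * iL F ι cc) * (z + iL F ι (Qp v)) := by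
        field_simp
      have h2 : (iL F ι a * z + iL F ι b) / (iL F ι cc * z + iL F ι d) * (iL F ι cc * z + iL F ι d)
          = iL F ι a * z + iL F ι b := div_mul_cancel₀ _ hcz
      linear_combination h1 - h2 - hbL
    have hdetL' : detL F (glA F ι M' hdetu') = detL F γ := by
      rw [detL_glA, hdetM', detL_eq_iL F ι hM]
    rw [hdetL', hjf', hact'] at hmod'
    rw [hw'def, ← hpolτ v] at hmod'
    exact hmod'
  -- assemble
  rw [slash, UP_eq, UP_eq, Finset.mul_sum]
  rw [← Equiv.sum_comp (Equiv.ofBijective τ hτbij)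
    (fun v => g ((z + iL F ι (polv ℘ v)) / iL F ι ℘))]
  apply Finset.sum_congr rfl
  intro v _
  exact key v

end Aux5
section Aux6

open Finset

set_option linter.unreachableTactic false
set_option linter.unnecessarySeqFocus false
set_option linter.unusedTactic false

lemma tri_swap {M : Type*} [AddCommMonoid M] (n : ℕ) (f : ℕ → ℕ → M) :
    ∑ h ∈ Finset.range (n+1), ∑ j ∈ Finset.range (h+1), f h j
      = ∑ j ∈ Finset.range (n+1), ∑ tt ∈ Finset.range (n+1-j), f (j+tt) j := by
  rw [Finset.sum_sigma', Finset.sum_sigma']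
  apply Finset.sum_nbij' (i := fun x => ⟨x.2, x.1 - x.2⟩) (j := fun x => ⟨x.1 + x.2, x.1⟩)
  · intro x hx
    simp only [Finset.mem_sigma, Finset.mem_range] at hx ⊢
    omega
  · intro x hx
    simp only [Finset.mem_sigma, Finset.mem_range] at hx ⊢
    omega
  · intro x hx
    simp only [Finset.mem_sigma, Finset.mem_range] at hx
    ext <;> simp <;> omega
  · intro x hx
    simp only [Finset.mem_sigma, Finset.mem_range] at hx
    ext <;> simp <;> omega
  · intro x hx
    simp only [Finset.mem_sigma, Finset.mem_range] at hx
    show f x.1 x.2 = f (x.2 + (x.1 - x.2)) x.2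
    congr 1
    omega

end Aux6
/-- Corollary 5.12: the E-expansion of `U_𝔭(f)`. -/
theorem Up_E_expansion
    {L : Type*} [Field L] {Fq : Type*} [Field Fq] [Fintype Fq]
    (F : Subfield L) (ι : Polynomial Fq →+* F) (hι : Function.Injective ι)
    (℘ : Polynomial Fq) (hmon : ℘.Monic) (hirr : Irreducible ℘)
    (𝔪 : Ideal (Polynomial Fq)) (h𝔪 : ¬ 𝔪 ≤ Ideal.span {℘})
    (π : L) (hπ : π ≠ 0) (E : L → L)
    (hE : EFunEq F {γ : GL (Fin 2) F | InGamma0 F ι ⊤ γ} π E)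
    (k m : ℤ) (ℓ : ℕ) (fE : ℕ → L → L)
    (hmod : ∀ i ≤ ℓ, IsModularOn F ι (𝔪 * Ideal.span {℘})
      (k - 2 * (i : ℤ)) (m - (i : ℤ)) (fE i))
    (f : L → L)
    (hf : ∀ z, f z = ∑ i ∈ Finset.range (ℓ + 1), fE i z * E z ^ i)
    (c : ℕ → L → L)
    (hc : ∀ i z, c i z = iL F ι ℘ ^ i *
      ∑ h ∈ Finset.range (ℓ - i + 1),
        ((h + i).choose i : L) *
          UP F ι ℘ (fun w => fE (h + i) w * Ep F ι ℘ E w ^ h) z) :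
    (∀ z ∈ Omega F,
        UP F ι ℘ f z = ∑ i ∈ Finset.range (ℓ + 1), c i z * E z ^ i) ∧
      ∀ i ≤ ℓ, IsModularOn F ι (𝔪 * Ideal.span {℘})
        (k - 2 * (i : ℤ)) (m - (i : ℤ)) (c i) := by
  have hPne : iL F ι ℘ ≠ 0 := iL_ne_zero F ι hι hmon.ne_zero
  have hEpmod : IsModularOn F ι (Ideal.span {℘}) 2 1 (Ep F ι ℘ E) :=
    Ep_modular hι hmon hπ hE
  have hle : 𝔪 * Ideal.span {℘} ≤ Ideal.span {℘} := Ideal.mul_le_right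
  constructor
  · -- Part 1 : the pointwise E-expansion identity
    intro z hz
    rw [UP_eq]
    have hEw : ∀ v : Fin ℘.natDegree → Fq,
        E ((z + iL F ι (polv ℘ v)) / iL F ι ℘)
          = iL F ι ℘ * E z +
            Ep F ι ℘ E ((z + iL F ι (polv ℘ v)) / iL F ι ℘) := by
      intro v
      rw [Ep, deltaP]
      have hPw : iL F ι ℘ * ((z + iL F ι (polv ℘ v)) / iL F ι ℘)
          = z + iL F ι (polv ℘ v) := by field_simp
      rw [hPw, E_translate hE _ hz]
      ring
    have step1 : ∀ v : Fin ℘.natDegree → Fq,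
        f ((z + iL F ι (polv ℘ v)) / iL F ι ℘)
          = ∑ h ∈ Finset.range (ℓ+1), ∑ j ∈ Finset.range (h+1),
              fE h ((z + iL F ι (polv ℘ v)) / iL F ι ℘) *
                ((iL F ι ℘ * E z) ^ j *
                  Ep F ι ℘ E ((z + iL F ι (polv ℘ v)) / iL F ι ℘) ^ (h - j) *
                  ((h.choose j : L))) := by
      intro v
      rw [hf]
      apply Finset.sum_congr rfl
      intro h _
      rw [hEw v, add_pow, Finset.mul_sum]
    have e1 : (∑ v : Fin ℘.natDegree → Fq,
          f ((z + iL F ι (polv ℘ v)) / iL F ι ℘))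
        = ∑ v : Fin ℘.natDegree → Fq, ∑ h ∈ Finset.range (ℓ+1), ∑ j ∈ Finset.range (h+1),
            fE h ((z + iL F ι (polv ℘ v)) / iL F ι ℘) *
              ((iL F ι ℘ * E z) ^ j *
                Ep F ι ℘ E ((z + iL F ι (polv ℘ v)) / iL F ι ℘) ^ (h - j) *
                ((h.choose j : L))) :=
      Finset.sum_congr rfl (fun v _ => step1 v)
    rw [e1, Finset.sum_comm]
    have e2 : ∀ h : ℕ, (∑ v : Fin ℘.natDegree → Fq, ∑ j ∈ Finset.range (h+1),
          fE h ((z + iL F ι (polv ℘ v)) / iL F ι ℘) *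
            ((iL F ι ℘ * E z) ^ j *
              Ep F ι ℘ E ((z + iL F ι (polv ℘ v)) / iL F ι ℘) ^ (h - j) *
              ((h.choose j : L))))
        = ∑ j ∈ Finset.range (h+1), ∑ v : Fin ℘.natDegree → Fq,
            fE h ((z + iL F ι (polv ℘ v)) / iL F ι ℘) *
              ((iL F ι ℘ * E z) ^ j *
                Ep F ι ℘ E ((z + iL F ι (polv ℘ v)) / iL F ι ℘) ^ (h - j) *
                ((h.choose j : L))) :=
      fun h => Finset.sum_comm
    rw [Finset.sum_congr rfl (fun h _ => e2 h), tri_swap ℓ]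
    apply Finset.sum_congr rfl
    intro i hi2
    have hiℓ : i ≤ ℓ := by
      simpa [Nat.lt_succ_iff] using hi2
    rw [hc i z]
    have hUPin : ∀ h : ℕ, UP F ι ℘ (fun w => fE (h + i) w * Ep F ι ℘ E w ^ h) z
        = ∑ v : Fin ℘.natDegree → Fq,
            fE (h + i) ((z + iL F ι (polv ℘ v)) / iL F ι ℘) *
              Ep F ι ℘ E ((z + iL F ι (polv ℘ v)) / iL F ι ℘) ^ h := fun h => rfl
    simp only [hUPin]
    rw [show ℓ + 1 - i = ℓ - i + 1 by omega]
    simp only [Finset.mul_sum, Finset.sum_mul]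
    apply Finset.sum_congr rfl
    intro tt _
    rw [Nat.add_comm i tt, Nat.add_sub_cancel]
    apply Finset.sum_congr rfl
    intro v _
    ring
  · -- Part 2 : modularity of the coefficients
    intro i hi
    apply IsModularOn.congr _ (hc i)
    apply IsModularOn.const_mul
    apply IsModularOn.sum
    intro h hh
    apply IsModularOn.const_mul
    apply UP_modular hι hmon hirr hle
    have hhl : h + i ≤ ℓ := by
      simp only [Finset.mem_range, Nat.lt_succ_iff] at hh
      omega
    have h1 := hmod (h + i) hhl
    have h2 := (hEpmod.mono hle).pow h
    exact h1.mul h2 (by push_cast; ring) (by push_cast; ring)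

end DrinfeldQM
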